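/- Let φ be an N-function such that both φ and its complementary function φ* satisfy the Δ₂-condition. Then φ is of type (p₀, p₁) for some exponents 1 < p₀ ≤ p₁ < ∞: there exists C > 0 such that φ(s·t) ≤ C·max{s^{p₀}, s^{p₁}}·φ(t) for all s, t ≥ 0, where p₀, p₁ and C depend only on the Δ₂-constants of φ and φ*. -/

import Mathlib

open MeasureTheory Real Filter

def IsNFunction (φ φ' : ℝ → ℝ) : Prop :=
  ConvexOn ℝ (Set.Ici 0) φ ∧
  φ 0 = 0 ∧ φ' 0 = 0 ∧
  (∀ t : ℝ, 0 ≤ t → φ t = ∫ s in (0:ℝ)..t, φ' s) ∧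
  (∀ t : ℝ, 0 ≤ t → ContinuousWithinAt φ' (Set.Ici t) t) ∧
  MonotoneOn φ' (Set.Ici 0) ∧
  (∀ t : ℝ, 0 < t → 0 < φ' t) ∧
  Tendsto φ' atTop atTop
/-- The Young conjugate `φ*(t) = sup_{s ≥ 0} (s·t − φ(s))`. -/
noncomputable def conjN (φ : ℝ → ℝ) (t : ℝ) : ℝ :=
  sSup {x : ℝ | ∃ s : ℝ, 0 ≤ s ∧ x = s * t - φ s}

set_option maxHeartbeats 1000000

lemma NF_intble {φ φ' : ℝ → ℝ} (h : IsNFunction φ φ') {a b : ℝ}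
    (ha : 0 ≤ a) (hab : a ≤ b) : IntervalIntegrable φ' volume a b := by
  apply MonotoneOn.intervalIntegrable
  apply h.2.2.2.2.2.1.mono
  rw [Set.uIcc_of_le hab]
  exact fun x hx => le_trans ha hx.1

lemma NF_diff_bounds {φ φ' : ℝ → ℝ} (h : IsNFunction φ φ') {a b : ℝ}
    (ha : 0 ≤ a) (hab : a ≤ b) :
    (b - a) * φ' a ≤ φ b - φ a ∧ φ b - φ a ≤ (b - a) * φ' b := by
  have hb : (0:ℝ) ≤ b := le_trans ha hab
  have hrepr : φ b - φ a = ∫ s in a..b, φ' s := by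
    rw [h.2.2.2.1 a ha, h.2.2.2.1 b hb]
    rw [← intervalIntegral.integral_interval_sub_left (NF_intble h le_rfl hb)
      (NF_intble h le_rfl ha)]
  have hmono := h.2.2.2.2.2.1
  constructor
  · rw [hrepr]
    calc (b - a) * φ' a = ∫ _ in a..b, φ' a := by
          rw [intervalIntegral.integral_const, smul_eq_mul]
      _ ≤ ∫ s in a..b, φ' s := by
          apply intervalIntegral.integral_mono_on hab intervalIntegrable_const
            (NF_intble h ha hab)
          intro x hx
          exact hmono ha (le_trans ha hx.1) hx.1
  · rw [hrepr]
    calc (∫ s in a..b, φ' s) ≤ ∫ _ in a..b, φ' b := by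
          apply intervalIntegral.integral_mono_on hab (NF_intble h ha hab)
            intervalIntegrable_const
          intro x hx
          exact hmono (le_trans ha hx.1) hb hx.2
      _ = (b - a) * φ' b := by
          rw [intervalIntegral.integral_const, smul_eq_mul]

lemma NF_nonneg {φ φ' : ℝ → ℝ} (h : IsNFunction φ φ') {t : ℝ} (ht : 0 ≤ t) :
    0 ≤ φ t := by
  have := (NF_diff_bounds h le_rfl ht).1
  rw [h.2.1, h.2.2.1] at this
  linarith

lemma NF_phi'_nonneg {φ φ' : ℝ → ℝ} (h : IsNFunction φ φ') {t : ℝ} (ht : 0 ≤ t) :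
    0 ≤ φ' t := by
  have := h.2.2.2.2.2.1 (le_refl (0:ℝ) : (0:ℝ) ∈ Set.Ici 0) ht ht
  rwa [h.2.2.1] at this

lemma NF_mono {φ φ' : ℝ → ℝ} (h : IsNFunction φ φ') {a b : ℝ}
    (ha : 0 ≤ a) (hab : a ≤ b) : φ a ≤ φ b := by
  have h1 := (NF_diff_bounds h ha hab).1
  have h2 := NF_phi'_nonneg h ha
  nlinarith

/-- key upper-bound lemma for the conjugate set -/
lemma NF_ub {φ φ' : ℝ → ℝ} (h : IsNFunction φ φ') {t : ℝ} (ht : 0 ≤ t) :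
    ∀ x ∈ {x : ℝ | ∃ s : ℝ, 0 ≤ s ∧ x = s * φ' t - φ s}, x ≤ t * φ' t - φ t := by
  rintro x ⟨s, hs, rfl⟩
  rcases le_total s t with hst | hst
  · have := (NF_diff_bounds h hs hst).2
    nlinarith
  · have := (NF_diff_bounds h ht hst).1
    nlinarith

lemma NF_conj_eq {φ φ' : ℝ → ℝ} (h : IsNFunction φ φ') {t : ℝ} (ht : 0 ≤ t) :
    conjN φ (φ' t) = t * φ' t - φ t := by
  apply le_antisymm
  · exact csSup_le ⟨t * φ' t - φ t, t, ht, rfl⟩ (NF_ub h ht)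
  · exact le_csSup ⟨t * φ' t - φ t, NF_ub h ht⟩ ⟨t, ht, rfl⟩

lemma NF_bdd {φ φ' : ℝ → ℝ} (h : IsNFunction φ φ') {u : ℝ} (hu : 0 ≤ u) :
    BddAbove {x : ℝ | ∃ s : ℝ, 0 ≤ s ∧ x = s * u - φ s} := by
  obtain ⟨t₀, ht₀⟩ := Filter.eventually_atTop.mp (h.2.2.2.2.2.2.2.eventually_ge_atTop u)
  set t₁ := max t₀ 0 with ht₁def
  refine ⟨t₁ * u, ?_⟩
  rintro x ⟨s, hs, rfl⟩
  have ht₁ : (0:ℝ) ≤ t₁ := le_max_right _ _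
  rcases le_total s t₁ with hst | hst
  · have := NF_nonneg h hs
    nlinarith
  · have h1 := (NF_diff_bounds h ht₁ hst).1
    have h2 : u ≤ φ' t₁ := ht₀ t₁ (le_max_left _ _)
    have h3 := NF_nonneg h ht₁
    nlinarith

lemma NF_young {φ φ' : ℝ → ℝ} (h : IsNFunction φ φ') {s u : ℝ}
    (hs : 0 ≤ s) (hu : 0 ≤ u) : s * u - φ s ≤ conjN φ u :=
  le_csSup (NF_bdd h hu) ⟨s, hs, rfl⟩

lemma NF_conj_nonneg {φ φ' : ℝ → ℝ} (h : IsNFunction φ φ') {u : ℝ} (hu : 0 ≤ u) :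
    0 ≤ conjN φ u := by
  have := NF_young h le_rfl hu
  rw [h.2.1] at this
  simpa using this

lemma NF_conj_mono {φ φ' : ℝ → ℝ} (h : IsNFunction φ φ') {u v : ℝ}
    (hu : 0 ≤ u) (huv : u ≤ v) : conjN φ u ≤ conjN φ v := by
  rw [conjN]
  refine csSup_le ⟨0 - φ 0, 0, le_rfl, by ring⟩ ?_
  rintro x ⟨s, hs, rfl⟩
  calc s * u - φ s ≤ s * v - φ s := by nlinarith
    _ ≤ conjN φ v := NF_young h hs (le_trans hu huv)

/-- Generic dyadic upper-type lemma. -/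
lemma dyadic_upper (f : ℝ → ℝ) (c : ℝ) (hc : 2 ≤ c)
    (hmono : ∀ x y, 0 ≤ x → x ≤ y → f x ≤ f y)
    (hnn : ∀ x, 0 ≤ x → 0 ≤ f x)
    (hΔ : ∀ x, 0 ≤ x → f (2 * x) ≤ c * f x) :
    ∀ l x, 1 ≤ l → 0 ≤ x → f (l * x) ≤ c * l ^ (logb 2 c) * f x := by
  have hc0 : (0:ℝ) < c := lt_of_lt_of_le two_pos hc
  have hr1 : 1 ≤ logb 2 c := by
    rw [show (1:ℝ) = logb 2 2 by simp]
    exact Real.logb_le_logb_of_le (by norm_num) two_pos hc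
  have hr0 : 0 ≤ logb 2 c := le_trans zero_le_one hr1
  have hstep : ∀ n : ℕ, ∀ x, 0 ≤ x → f ((2:ℝ)^n * x) ≤ c^n * f x := by
    intro n
    induction n with
    | zero => intro x hx; simp
    | succ n ih =>
      intro x hx
      have h1 : ((2:ℝ)^(n+1)) * x = 2 * ((2:ℝ)^n * x) := by ring
      have h2 : (0:ℝ) ≤ (2:ℝ)^n * x := by positivity
      calc f ((2:ℝ)^(n+1) * x) = f (2 * ((2:ℝ)^n * x)) := by rw [h1]
        _ ≤ c * f ((2:ℝ)^n * x) := hΔ _ h2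
        _ ≤ c * (c^n * f x) := by
            exact mul_le_mul_of_nonneg_left (ih x hx) (le_of_lt hc0)
        _ = c^(n+1) * f x := by ring
  intro l x hl hx
  have hl0 : (0:ℝ) < l := lt_of_lt_of_le one_pos hl
  set n := ⌈logb 2 l⌉₊ with hn
  have hlogl : 0 ≤ logb 2 l := Real.logb_nonneg one_lt_two hl
  have hln : l ≤ (2:ℝ)^n := by
    have : l = (2:ℝ) ^ (logb 2 l) := (Real.rpow_logb two_pos (by norm_num) hl0).symm
    rw [this, ← Real.rpow_natCast 2 n]
    exact Real.rpow_le_rpow_of_exponent_le one_le_two (Nat.le_ceil _)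
  have h1 : f (l * x) ≤ f ((2:ℝ)^n * x) :=
    hmono _ _ (by positivity) (mul_le_mul_of_nonneg_right hln hx)
  have h2 : f ((2:ℝ)^n * x) ≤ c^n * f x := hstep n x hx
  have h3 : c^n ≤ c * l ^ (logb 2 c) := by
    have hnle : (n:ℝ) ≤ logb 2 l + 1 := le_of_lt (Nat.ceil_lt_add_one hlogl)
    have hc2 : c = (2:ℝ) ^ (logb 2 c) := (Real.rpow_logb two_pos (by norm_num) hc0).symm
    calc c^n = ((2:ℝ) ^ (logb 2 c))^n := by rw [← hc2]
      _ = (2:ℝ) ^ (logb 2 c * n) := by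
          rw [← Real.rpow_natCast ((2:ℝ) ^ (logb 2 c)) n, ← Real.rpow_mul (by norm_num)]
      _ ≤ (2:ℝ) ^ (logb 2 c * (logb 2 l + 1)) := by
          apply Real.rpow_le_rpow_of_exponent_le one_le_two
          exact mul_le_mul_of_nonneg_left hnle hr0
      _ = (2:ℝ) ^ (logb 2 l * logb 2 c) * (2:ℝ) ^ (logb 2 c) := by
          rw [← Real.rpow_add two_pos]; ring_nf
      _ = l ^ (logb 2 c) * c := by
          rw [Real.rpow_mul (by norm_num), Real.rpow_logb two_pos (by norm_num) hl0, ← hc2]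
      _ = c * l ^ (logb 2 c) := by ring
  calc f (l * x) ≤ c^n * f x := le_trans h1 h2
    _ ≤ c * l ^ (logb 2 c) * f x := mul_le_mul_of_nonneg_right h3 (hnn x hx)

/-- If an N-function and its conjugate both satisfy Δ₂, then φ is of type (p₀, p₁) with
`1 < p₀ ≤ p₁ < ∞`, with p₀, p₁, C depending only on the Δ₂-constants: here we quantify the
Δ₂-constants first and obtain p₀, p₁, C uniformly for all such φ. -/
theorem type_p0_p1 (c₁ c₂ : ℝ) (hc₁ : 0 < c₁) (hc₂ : 0 < c₂) :
    ∃ p₀ p₁ C : ℝ, 1 < p₀ ∧ p₀ ≤ p₁ ∧ 0 < C ∧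
      ∀ φ φ' : ℝ → ℝ, IsNFunction φ φ' →
        (∀ t : ℝ, 0 ≤ t → φ (2 * t) ≤ c₁ * φ t) →
        (∀ t : ℝ, 0 ≤ t → conjN φ (2 * t) ≤ c₂ * conjN φ t) →
        ∀ s t : ℝ, 0 ≤ s → 0 ≤ t →
          φ (s * t) ≤ C * max (s ^ p₀) (s ^ p₁) * φ t := by
  set c1 := max c₁ 2 with hc1def
  set c2 := max c₂ 4 with hc2def
  set q := logb 2 c2 with hqdef
  set r := logb 2 c1 with hrdef
  set p₀ := q / (q - 1) with hp0def
  set p₁ := max r p₀ with hp1def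
  set C := c1 + c2 * c2 with hCdef
  have hc1two : (2:ℝ) ≤ c1 := le_max_right _ _
  have hc1pos : (0:ℝ) < c1 := lt_of_lt_of_le two_pos hc1two
  have hc2four : (4:ℝ) ≤ c2 := le_max_right _ _
  have hc2two : (2:ℝ) ≤ c2 := le_trans (by norm_num) hc2four
  have hc2pos : (0:ℝ) < c2 := lt_of_lt_of_le two_pos hc2two
  have h24 : (2:ℝ) ^ (2:ℝ) = 4 := by
    rw [show (2:ℝ) = ((2:ℕ):ℝ) from by norm_num, Real.rpow_natCast]; norm_num
  have h4 : logb 2 4 = 2 := by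
    rw [← h24, Real.logb_rpow two_pos (by norm_num)]
  have hq2 : (2:ℝ) ≤ q := by
    have h := Real.logb_le_logb_of_le one_lt_two (by norm_num : (0:ℝ) < 4) hc2four
    rw [h4] at h
    exact h
  have hq1 : (0:ℝ) < q - 1 := by linarith
  have hp₀gt : 1 < p₀ := by
    rw [hp0def, lt_div_iff₀ hq1]; linarith
  have hp₀le2 : p₀ ≤ 2 := by
    rw [hp0def, div_le_iff₀ hq1]; linarith
  have hr1 : (1:ℝ) ≤ r := by
    rw [hrdef, show (1:ℝ) = logb 2 2 by simp]
    exact Real.logb_le_logb_of_le one_lt_two two_pos hc1two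
  have hCpos : 0 < C := by positivity
  refine ⟨p₀, p₁, C, hp₀gt, le_max_right _ _, hCpos, ?_⟩
  intro φ φ' hN hΔ1 hΔ2 s t hs ht
  have hΔ1' : ∀ x : ℝ, 0 ≤ x → φ (2 * x) ≤ c1 * φ x := fun x hx =>
    le_trans (hΔ1 x hx) (mul_le_mul_of_nonneg_right (le_max_left _ _) (NF_nonneg hN hx))
  have hΔ2' : ∀ x : ℝ, 0 ≤ x → conjN φ (2 * x) ≤ c2 * conjN φ x := fun x hx =>
    le_trans (hΔ2 x hx) (mul_le_mul_of_nonneg_right (le_max_left _ _) (NF_conj_nonneg hN hx))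
  have hupφ : ∀ l x : ℝ, 1 ≤ l → 0 ≤ x → φ (l * x) ≤ c1 * l ^ r * φ x :=
    dyadic_upper φ c1 hc1two (fun x y hx hxy => NF_mono hN hx hxy)
      (fun x hx => NF_nonneg hN hx) hΔ1'
  have hupψ : ∀ l x : ℝ, 1 ≤ l → 0 ≤ x → conjN φ (l * x) ≤ c2 * l ^ q * conjN φ x :=
    dyadic_upper (conjN φ) c2 hc2two (fun x y hx hxy => NF_conj_mono hN hx hxy)
      (fun x hx => NF_conj_nonneg hN hx) hΔ2'
  rcases eq_or_lt_of_le ht with ht0 | ht0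
  · rw [← ht0, mul_zero, hN.2.1, mul_zero]
  rcases eq_or_lt_of_le hs with hs0 | hs0
  · rw [← hs0, zero_mul, hN.2.1, Real.zero_rpow (by linarith : p₀ ≠ 0),
      Real.zero_rpow (by rw [hp1def]; positivity : p₁ ≠ 0)]
    simp
  have hφt : 0 ≤ φ t := NF_nonneg hN ht
  rcases le_or_gt 1 s with hs1 | hs1
  -- case s ≥ 1
  · have h1 : φ (s * t) ≤ c1 * s ^ r * φ t := hupφ s t hs1 ht
    have h2 : s ^ r ≤ s ^ p₁ :=
      Real.rpow_le_rpow_of_exponent_le hs1 (le_max_left _ _)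
    have h3 : s ^ p₁ ≤ max (s ^ p₀) (s ^ p₁) := le_max_right _ _
    have h4' : (0:ℝ) ≤ s ^ r := Real.rpow_nonneg hs _
    have hc1C : c1 ≤ C := by nlinarith
    calc φ (s * t) ≤ c1 * s ^ r * φ t := h1
      _ ≤ C * max (s ^ p₀) (s ^ p₁) * φ t := by
          apply mul_le_mul_of_nonneg_right _ hφt
          calc c1 * s ^ r ≤ C * s ^ r := mul_le_mul_of_nonneg_right hc1C h4'
            _ ≤ C * s ^ p₁ := mul_le_mul_of_nonneg_left h2 (le_of_lt hCpos)
            _ ≤ C * max (s ^ p₀) (s ^ p₁) := mul_le_mul_of_nonneg_left h3 (le_of_lt hCpos)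
  rcases le_or_gt 1 (c2 * s) with hcs | hcs
  -- case 1/c2 ≤ s ≤ 1
  · have h1 : φ (s * t) ≤ φ t := by
      apply NF_mono hN (by positivity)
      nlinarith
    have h2 : s ^ (2:ℝ) ≤ s ^ p₀ :=
      Real.rpow_le_rpow_of_exponent_ge hs0 (le_of_lt hs1) hp₀le2
    have h2' : s ^ (2:ℝ) = s * s := by
      rw [show (2:ℝ) = ((2:ℕ):ℝ) by norm_num, Real.rpow_natCast]; ring
    have h3 : 1 ≤ C * (s * s) := by nlinarith
    have h4' : s ^ p₀ ≤ max (s ^ p₀) (s ^ p₁) := le_max_left _ _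
    have h5 : 1 ≤ C * max (s ^ p₀) (s ^ p₁) := by
      calc (1:ℝ) ≤ C * (s * s) := h3
        _ = C * s ^ (2:ℝ) := by rw [h2']
        _ ≤ C * s ^ p₀ := mul_le_mul_of_nonneg_left h2 (le_of_lt hCpos)
        _ ≤ C * max (s ^ p₀) (s ^ p₁) := mul_le_mul_of_nonneg_left h4' (le_of_lt hCpos)
    calc φ (s * t) ≤ φ t := h1
      _ = 1 * φ t := (one_mul _).symm
      _ ≤ C * max (s ^ p₀) (s ^ p₁) * φ t := mul_le_mul_of_nonneg_right h5 hφt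
  -- main case: 0 < s, c2 * s < 1
  · set b := c2 * s with hbdef
    have hb0 : (0:ℝ) < b := by positivity
    have hb1 : b ≤ 1 := le_of_lt hcs
    set e := (q - 1)⁻¹ with hedef
    have he0 : (0:ℝ) < e := inv_pos.mpr hq1
    set l := b ^ (-e) with hldef
    have hl0 : (0:ℝ) < l := Real.rpow_pos_of_pos hb0 _
    have hl1 : (1:ℝ) ≤ l :=
      Real.one_le_rpow_of_pos_of_le_one_of_nonpos hb0 hb1 (by linarith)
    have hlq : l ^ q = b ^ (-p₀) := by
      rw [hldef, ← Real.rpow_mul (le_of_lt hb0)]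
      congr 1
      rw [hp0def, hedef]
      field_simp
    have hbp : b ^ (-p₀) = b⁻¹ * l := by
      rw [hldef, ← Real.rpow_neg_one b, ← Real.rpow_add hb0]
      congr 1
      rw [hp0def, hedef]
      field_simp
      ring
    set x := s * t with hxdef
    have hx0 : (0:ℝ) < x := by positivity
    set u := φ' x with hudef
    have hu0 : (0:ℝ) ≤ u := NF_phi'_nonneg hN (le_of_lt hx0)
    set M := c2 * l ^ q with hMdef
    have hM0 : (0:ℝ) < M := by
      rw [hMdef]; positivity
    have key1 : conjN φ u = x * u - φ x := NF_conj_eq hN (le_of_lt hx0)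
    have key2 : conjN φ (l * u) ≤ M * (x * u - φ x) := by
      rw [hMdef, ← key1]
      exact hupψ l u hl1 hu0
    have key3 : t * (l * u) - φ t ≤ conjN φ (l * u) :=
      NF_young hN ht (by positivity)
    have hMx : M * x = l * t := by
      rw [hMdef, hlq, hbp, hxdef]
      have : c2 * s = b := rfl
      field_simp
      ring
    have e1 : M * (x * u - φ x) = t * (l * u) - M * φ x := by
      rw [mul_sub, ← mul_assoc, hMx]; ring
    have key5 : M * φ x ≤ φ t := by
      rw [e1] at key2
      linarith [le_trans key3 key2]
    have hMinv : M⁻¹ = c2 ^ (p₀ - 1) * s ^ p₀ := by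
      rw [hMdef, hlq, mul_inv, Real.rpow_neg (le_of_lt hb0), inv_inv, hbdef,
        Real.mul_rpow (le_of_lt hc2pos) hs, ← Real.rpow_neg_one c2, ← mul_assoc,
        ← Real.rpow_add hc2pos, show (-1:ℝ) + p₀ = p₀ - 1 by ring]
    have key6 : φ x ≤ M⁻¹ * φ t := by
      rw [← mul_le_mul_iff_right₀ hM0, ← mul_assoc, mul_inv_cancel₀ (ne_of_gt hM0), one_mul]
      exact key5
    have h7 : c2 ^ (p₀ - 1) ≤ C := by
      have h8 : c2 ^ (p₀ - 1) ≤ c2 ^ (1:ℝ) :=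
        Real.rpow_le_rpow_of_exponent_le (by linarith) (by linarith)
      rw [Real.rpow_one] at h8
      have h9 : c2 ≤ c2 * c2 := le_mul_of_one_le_left (le_of_lt hc2pos) (by linarith)
      linarith
    calc φ (s * t) = φ x := rfl
      _ ≤ M⁻¹ * φ t := key6
      _ = c2 ^ (p₀ - 1) * s ^ p₀ * φ t := by rw [hMinv]
      _ ≤ C * s ^ p₀ * φ t := by
          apply mul_le_mul_of_nonneg_right _ hφt
          exact mul_le_mul_of_nonneg_right h7 (Real.rpow_nonneg hs _)
      _ ≤ C * max (s ^ p₀) (s ^ p₁) * φ t := by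
          apply mul_le_mul_of_nonneg_right _ hφt
          exact mul_le_mul_of_nonneg_left (le_max_left _ _) (le_of_lt hCpos)
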